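/- Let c₁ be a constant such that any n points in the square of area n have MST of length at most c₁ n. Then for sufficiently large n, for any configuration of n points in [0, n^{1/2}]² with distinct interpoint distances and MST T_n, there exists a spanning tree T'' on the same points with len(T'') ≤ 12 c₁ n and |T'' \ T_n| ≥ n/2. -/

import Mathlib

open SimpleGraph Finset

/-- `T` (a finite set of edges) is a spanning tree of `G`. -/
def IsST {V : Type*} (G : SimpleGraph V) (T : Finset (Sym2 V)) : Prop :=
  ↑T ⊆ G.edgeSet ∧ (SimpleGraph.fromEdgeSet (↑T : Set (Sym2 V))).IsTree

/-- Total length of a set of edges. -/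
noncomputable def lenSum {V : Type*} (len : Sym2 V → ℝ) (T : Finset (Sym2 V)) : ℝ :=
  ∑ e ∈ T, len e

/-- The Euclidean edge-length function induced by a point configuration. -/
noncomputable def eucLen {n d : ℕ} (x : Fin n → EuclideanSpace ℝ (Fin d)) :
    Sym2 (Fin n) → ℝ :=
  Sym2.lift ⟨fun i j => dist (x i) (x j), fun _ _ => dist_comm _ _⟩

/-- Suppose `c₁` is such that any `n` points in the square `[0,√n]²` have MST of length
at most `c₁ n`.  Then for all sufficiently large `n`, for any `n` points in `[0,√n]²`
with distinct interpoint distances and MST `T_n`, there is a spanning tree `T''` with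
`len(T'') ≤ 12 c₁ n` and `|T'' \ T_n| ≥ n/2`. -/
lemma reachable_invariant {V : Type*} {H : SimpleGraph V} {F : V → Prop}
    (h : ∀ a b, H.Adj a b → (F a ↔ F b)) {a b : V} (hr : H.Reachable a b) : F a ↔ F b := by
  obtain ⟨p⟩ := hr
  induction p with
  | nil => rfl
  | cons h' _ ih => exact (h _ _ h').trans ih

lemma no_periodic {n : ℕ} [NeZero n] {P : Fin n → Fin n} {R : Fin n → ℕ}
    (hP0 : P 0 = 0) (hlt : ∀ j : Fin n, j ≠ 0 → P j ≠ j ∧ R (P j) < R j) :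
    ∀ j : Fin n, ∀ m : ℕ, P^[m + 1] j = j → j = 0 := by
  have main : ∀ N : ℕ, ∀ j : Fin n, R j < N → ∀ m : ℕ, P^[m + 1] j = j → j = 0 := by
    intro N
    induction N with
    | zero => exact fun j hj => absurd hj (by omega)
    | succ N ih =>
      intro j hj m hm
      by_contra hjne
      have h1 := hlt j hjne
      have hcyc : P^[m + 1] (P j) = P j := by
        have : P^[m + 1] (P j) = P (P^[m+1] j) := by
          rw [← Function.iterate_succ_apply, Function.iterate_succ_apply']
        rw [this, hm]
      have hPj0 : P j = 0 := ih (P j) (by omega) m hcyc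
      have : P^[m+1] j = 0 := by
        rw [Function.iterate_succ_apply, hPj0, Function.iterate_fixed hP0]
      exact hjne (hm ▸ this)
  exact fun j m hm => main (R j + 1) j (by omega) m hm

/-- Parent-pointer spanning tree lemma. -/
lemma parent_isST {n : ℕ} (hn : 0 < n) (σ : Equiv.Perm (Fin n)) (P : Fin n → Fin n)
    (R : Fin n → ℕ) (hP0 : haveI : NeZero n := ⟨hn.ne'⟩; P 0 = 0)
    (hlt : haveI : NeZero n := ⟨hn.ne'⟩; ∀ j : Fin n, j ≠ 0 → P j ≠ j ∧ R (P j) < R j) :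
    haveI : NeZero n := ⟨hn.ne'⟩
    IsST (⊤ : SimpleGraph (Fin n))
      ((univ.erase (0 : Fin n)).image (fun j => s(σ j, σ (P j)))) := by
  haveI : NeZero n := ⟨hn.ne'⟩
  set E : Finset (Sym2 (Fin n)) :=
    (univ.erase (0 : Fin n)).image (fun j => s(σ j, σ (P j))) with hE
  have memE : ∀ e, e ∈ E ↔ ∃ j : Fin n, j ≠ 0 ∧ e = s(σ j, σ (P j)) := by
    intro e
    simp [hE, eq_comm]
  have hne : ∀ j : Fin n, j ≠ 0 → σ j ≠ σ (P j) := by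
    intro j hj h
    exact (hlt j hj).1 (σ.injective h).symm
  set G := SimpleGraph.fromEdgeSet (↑E : Set (Sym2 (Fin n))) with hG
  have hAdj : ∀ a b, G.Adj a b ↔ (s(a, b) ∈ E ∧ a ≠ b) := by
    intro a b; rw [hG, SimpleGraph.fromEdgeSet_adj]; simp
  constructor
  · intro e he
    rw [SimpleGraph.edgeSet_top]
    obtain ⟨j, hj, rfl⟩ := (memE e).1 he
    simp [hne j hj]
  · constructor
    · -- connected
      have key : ∀ v : Fin n, G.Reachable v (σ 0) := by
        have main : ∀ N : ℕ, ∀ v : Fin n, R (σ.symm v) < N → G.Reachable v (σ 0) := by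
          intro N
          induction N with
          | zero => exact fun v hv => absurd hv (by omega)
          | succ N ih =>
            intro v hv
            by_cases h0 : σ.symm v = 0
            · have : v = σ 0 := by rw [← h0]; simp
              exact this ▸ SimpleGraph.Reachable.refl _
            · have hadj : G.Adj v (σ (P (σ.symm v))) := by
                rw [hAdj]
                constructor
                · rw [memE]
                  exact ⟨σ.symm v, h0, by simp⟩
                · have := hne _ h0
                  simpa using this
              have hrank := (hlt _ h0).2
              have := ih (σ (P (σ.symm v))) (by simpa using by omega)
              exact (hadj.reachable).trans this
        exact fun v => main (R (σ.symm v) + 1) v (by omega)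
      rw [SimpleGraph.connected_iff]
      exact ⟨fun u v => (key u).trans (key v).symm, ⟨0⟩⟩
    · -- acyclic
      rw [SimpleGraph.isAcyclic_iff_forall_adj_isBridge]
      intro v w hvw
      rw [SimpleGraph.isBridge_iff]
      obtain ⟨hmem, hvw'⟩ := (hAdj v w).1 hvw
      obtain ⟨j₀, hj₀, hedge⟩ := (memE _).1 hmem
      -- cut function
      set F : Fin n → Prop := fun u => ∃ k, P^[k] (σ.symm u) = j₀ with hF
      have hFinv : ∀ a b, (G \ SimpleGraph.fromEdgeSet {s(v, w)}).Adj a b → (F a ↔ F b) := by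
        intro a b hab
        rw [SimpleGraph.sdiff_adj] at hab
        obtain ⟨hab1, hab2⟩ := hab
        have habne : a ≠ b := hab1.ne
        rw [SimpleGraph.fromEdgeSet_adj] at hab2
        simp only [Set.mem_singleton_iff, not_and, not_ne_iff] at hab2
        have hab3 : s(a,b) ≠ s(v,w) := by
          intro h; exact habne (hab2 h)
        obtain ⟨hmem', -⟩ := (hAdj a b).1 hab1
        obtain ⟨j, hj, hj'⟩ := (memE _).1 hmem'
        have hjj₀ : j ≠ j₀ := by
          intro h
          exact hab3 (by rw [hj', h, ← hedge])
        -- key claim for the pair (σ j, σ (P j))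
        have main : F (σ j) ↔ F (σ (P j)) := by
          constructor
          · rintro ⟨k, hk⟩
            simp only [Equiv.symm_apply_apply] at hk
            cases k with
            | zero => exact absurd hk hjj₀
            | succ k' =>
              refine ⟨k', ?_⟩
              simpa [Function.iterate_succ_apply] using hk
          · rintro ⟨k, hk⟩
            simp only [Equiv.symm_apply_apply] at hk
            refine ⟨k + 1, ?_⟩
            simpa [Function.iterate_succ_apply] using hk
        rcases Sym2.eq_iff.1 hj' with ⟨rfl, rfl⟩ | ⟨rfl, rfl⟩
        · exact main
        · exact main.symm
      intro hreach
      have hiff := reachable_invariant hFinv hreach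
      -- v w is the edge σ j₀, σ (P j₀) in some order
      have hFj₀ : F (σ j₀) := ⟨0, by simp⟩
      have hFPj₀ : ¬ F (σ (P j₀)) := by
        rintro ⟨k, hk⟩
        simp only [Equiv.symm_apply_apply] at hk
        have : P^[k+1] j₀ = j₀ := by
          simpa [Function.iterate_succ_apply] using hk
        exact hj₀ (no_periodic hP0 hlt j₀ k this)
      rcases Sym2.eq_iff.1 hedge with ⟨rfl, rfl⟩ | ⟨rfl, rfl⟩
      · exact hFPj₀ (hiff.1 hFj₀)
      · exact hFPj₀ (hiff.2 hFj₀)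

lemma card_of_isST {n : ℕ} {T : Finset (Sym2 (Fin n))}
    (h : IsST (⊤ : SimpleGraph (Fin n)) T) : T.card = n - 1 := by
  classical
  obtain ⟨hsub, htree⟩ := h
  haveI : Fintype (SimpleGraph.fromEdgeSet (↑T : Set (Sym2 (Fin n)))).edgeSet := by
    rw [SimpleGraph.edgeSet_fromEdgeSet]
    exact Set.Finite.fintype ((T.finite_toSet).diff)
  have hcard := htree.card_edgeFinset
  have hfs : (SimpleGraph.fromEdgeSet (↑T : Set (Sym2 (Fin n)))).edgeFinset = T := by
    ext e
    rw [SimpleGraph.mem_edgeFinset, SimpleGraph.edgeSet_fromEdgeSet]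
    simp only [Set.mem_diff, Finset.mem_coe, Set.mem_setOf_eq]
    constructor
    · exact fun he => he.1
    · intro he
      refine ⟨he, ?_⟩
      have := hsub he
      rw [SimpleGraph.edgeSet_top] at this
      exact this
  rw [hfs] at hcard
  simp only [Fintype.card_fin] at hcard
  omega

lemma eucLen_mk {n d : ℕ} (x : Fin n → EuclideanSpace ℝ (Fin d)) (a b : Fin n) :
    eucLen x s(a, b) = dist (x a) (x b) := rfl

lemma lenSum_parent {n : ℕ} (hn : 0 < n) (x : Fin n → EuclideanSpace ℝ (Fin 2))
    (σ : Equiv.Perm (Fin n)) (P : Fin n → Fin n) (R : Fin n → ℕ)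
    (hlt : haveI : NeZero n := ⟨hn.ne'⟩; ∀ j : Fin n, j ≠ 0 → P j ≠ j ∧ R (P j) < R j) :
    haveI : NeZero n := ⟨hn.ne'⟩
    lenSum (eucLen x) ((univ.erase (0 : Fin n)).image (fun j => s(σ j, σ (P j))))
      = ∑ j ∈ univ.erase (0 : Fin n), dist (x (σ j)) (x (σ (P j))) := by
  haveI : NeZero n := ⟨hn.ne'⟩
  rw [lenSum, Finset.sum_image]
  · rfl
  · intro i hi j hj hij
    simp only [Finset.mem_coe, Finset.mem_erase] at hi hj
    rcases Sym2.eq_iff.1 hij with ⟨h1, h2⟩ | ⟨h1, h2⟩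
    · exact σ.injective h1
    · exfalso
      have e2 : i = P j := σ.injective h1
      have e3 : P i = j := σ.injective h2
      have l1 := (hlt i hi.1).2
      have l2 := (hlt j hj.1).2
      rw [← e2] at l2
      rw [e3] at l1
      omega

lemma dist_le_coords (p q : EuclideanSpace ℝ (Fin 2)) :
    dist p q ≤ |p 0 - q 0| + |p 1 - q 1| := by
  rw [EuclideanSpace.dist_eq]
  have h2 : ∑ i : Fin 2, dist (p i) (q i) ^ 2 = (p 0 - q 0) ^ 2 + (p 1 - q 1) ^ 2 := by
    simp [Fin.sum_univ_two, Real.dist_eq, sq_abs]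
  rw [show (fun i => dist (p i) (q i) ^ 2) = fun i => dist (p i) (q i) ^ 2 from rfl]
  calc Real.sqrt (∑ i : Fin 2, dist (p i) (q i) ^ 2)
      = Real.sqrt ((p 0 - q 0) ^ 2 + (p 1 - q 1) ^ 2) := by rw [h2]
    _ ≤ |p 0 - q 0| + |p 1 - q 1| := by
        rw [show |p 0 - q 0| + |p 1 - q 1| =
          Real.sqrt ((|p 0 - q 0| + |p 1 - q 1|) ^ 2) from
          (Real.sqrt_sq (by positivity)).symm]
        apply Real.sqrt_le_sqrt
        have := abs_nonneg (p 0 - q 0)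
        have := abs_nonneg (p 1 - q 1)
        nlinarith [sq_abs (p 0 - q 0), sq_abs (p 1 - q 1)]

lemma coord_le_dist (p q : EuclideanSpace ℝ (Fin 2)) (k : Fin 2) :
    |p k - q k| ≤ dist p q := by
  rw [EuclideanSpace.dist_eq, show |p k - q k| = Real.sqrt ((p k - q k) ^ 2) from
    (Real.sqrt_sq_eq_abs _).symm]
  apply Real.sqrt_le_sqrt
  have : (p k - q k) ^ 2 = dist (p k) (q k) ^ 2 := by
    rw [Real.dist_eq, sq_abs]
  rw [this]
  exact Finset.single_le_sum (f := fun i => dist (p i) (q i) ^ 2)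
    (fun i _ => sq_nonneg _) (mem_univ k)

lemma dist_le_of_square {A : ℝ} {p q : EuclideanSpace ℝ (Fin 2)}
    (hp : ∀ k : Fin 2, p k ∈ Set.Icc (0:ℝ) A) (hq : ∀ k : Fin 2, q k ∈ Set.Icc (0:ℝ) A) :
    dist p q ≤ 2 * A := by
  have h := dist_le_coords p q
  have h0p := hp 0; have h1p := hp 1; have h0q := hq 0; have h1q := hq 1
  simp only [Set.mem_Icc] at h0p h1p h0q h1q
  have h1 : |p 0 - q 0| ≤ A := abs_sub_le_of_nonneg_of_le h0p.1 h0p.2 h0q.1 h0q.2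
  have h2 : |p 1 - q 1| ≤ A := abs_sub_le_of_nonneg_of_le h1p.1 h1p.2 h1q.1 h1q.2
  linarith

/-- vertex along the tour -/
def vtx {n : ℕ} (hn : 0 < n) (σ : Equiv.Perm (Fin n)) (t : ℕ) : Fin n :=
  σ ⟨min t (n-1), by omega⟩

lemma vtx_val {n : ℕ} (hn : 0 < n) (σ : Equiv.Perm (Fin n)) (j : Fin n) :
    vtx hn σ j.val = σ j := by
  unfold vtx
  congr 1
  ext
  simp
  omega

lemma exists_sorted_tour {n : ℕ} (hn : 0 < n) (x : Fin n → EuclideanSpace ℝ (Fin 2))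
    (hx : ∀ i : Fin n, ∀ k : Fin 2, x i k ∈ Set.Icc (0 : ℝ) (Real.sqrt n)) :
    ∃ σ : Equiv.Perm (Fin n),
      ∑ t ∈ range (n-1), dist (x (vtx hn σ t)) (x (vtx hn σ (t+1)))
        ≤ 3.5 * n + Real.sqrt n := by
  classical
  set A := Real.sqrt n with hA
  have hA0 : 0 ≤ A := Real.sqrt_nonneg _
  set key : Fin n → ℤ ×ₗ ℝ := fun i => toLex (⌊x i 1 / 2⌋, x i 0) with hkey
  refine ⟨Tuple.sort key, ?_⟩
  set σ := Tuple.sort key with hσ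
  have hmono : Monotone (key ∘ σ) := Tuple.monotone_sort key
  -- abbreviations
  set v : ℕ → Fin n := fun t => vtx hn σ t with hv
  set a : ℕ → ℝ := fun t => x (v t) 0 with ha
  set b : ℕ → ℝ := fun t => x (v t) 1 with hb
  set s : ℕ → ℤ := fun t => ⌊b t / 2⌋ with hs
  have hxa : ∀ t, 0 ≤ a t ∧ a t ≤ A := fun t => (hx (v t) 0)
  have hxb : ∀ t, 0 ≤ b t ∧ b t ≤ A := fun t => (hx (v t) 1)
  have hmono' : ∀ t u : ℕ, t ≤ u → key (v t) ≤ key (v u) := by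
    intro t u htu
    apply hmono
    show (⟨min t (n-1), _⟩ : Fin n) ≤ ⟨min u (n-1), _⟩
    simp [Fin.le_def]
    omega
  have hkv : ∀ t, key (v t) = toLex (s t, a t) := fun t => rfl
  have hlex : ∀ t u : ℕ, t ≤ u → s t < s u ∨ (s t = s u ∧ a t ≤ a u) := by
    intro t u htu
    have := hmono' t u htu
    rw [hkv, hkv, Prod.Lex.le_iff] at this
    exact this
  -- per-term bound
  have hterm : ∀ t : ℕ, dist (x (v t)) (x (v (t+1)))
      ≤ (a (t+1) - a t) + 2 + (((s (t+1) : ℝ)) - ((s t : ℝ))) * (3 * A) := by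
    intro t
    have hd := dist_le_coords (x (v t)) (x (v (t+1)))
    rcases hlex t (t+1) (by omega) with hlt | ⟨heq, hle⟩
    · -- cross strip
      have hdist : dist (x (v t)) (x (v (t+1))) ≤ 2 * A := by
        apply dist_le_of_square (hx _) (hx _)
      have hΔs : (1 : ℝ) ≤ (s (t+1) : ℝ) - (s t : ℝ) := by
        have h' : s t + 1 ≤ s (t+1) := hlt
        have h'' : ((s t + 1 : ℤ) : ℝ) ≤ ((s (t+1) : ℤ) : ℝ) := by exact_mod_cast h'
        push_cast at h''
        linarith
      have ha1 := hxa t; have ha2 := hxa (t+1)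
      nlinarith
    · -- same strip
      have hb1 : (s t : ℝ) ≤ b t / 2 := Int.floor_le _
      have hb2 : b t / 2 < (s t : ℝ) + 1 := Int.lt_floor_add_one _
      have hb3 : (s t : ℝ) ≤ b (t+1) / 2 := heq ▸ Int.floor_le _
      have hb4 : b (t+1) / 2 < (s t : ℝ) + 1 := by
        rw [heq]; exact Int.lt_floor_add_one _
      have habs : |b (t+1) - b t| ≤ 2 := by
        rw [abs_le]; constructor <;> linarith
      have habsa : |a (t+1) - a t| = a (t+1) - a t := abs_of_nonneg (by linarith)
      have : |x (v t) 0 - x (v (t+1)) 0| = |a (t+1) - a t| := by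
        rw [abs_sub_comm]
      have h2 : |x (v t) 1 - x (v (t+1)) 1| = |b (t+1) - b t| := by
        rw [abs_sub_comm]
      rw [heq]
      rw [this, h2, habsa] at hd
      linarith
  -- sum up
  calc ∑ t ∈ range (n-1), dist (x (v t)) (x (v (t+1)))
      ≤ ∑ t ∈ range (n-1),
        ((a (t+1) - a t) + 2 + (((s (t+1) : ℝ)) - ((s t : ℝ))) * (3 * A)) :=
        Finset.sum_le_sum (fun t _ => hterm t)
    _ = (a (n-1) - a 0) + 2 * ((n:ℝ)-1) + ((s (n-1) : ℝ) - (s 0 : ℝ)) * (3 * A) := by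
        rw [Finset.sum_add_distrib, Finset.sum_add_distrib, Finset.sum_range_sub (fun t => a t),
          ← Finset.sum_mul, Finset.sum_range_sub (fun t => ((s t : ℝ))),
          Finset.sum_const, Finset.card_range, nsmul_eq_mul, Nat.cast_sub hn]
        push_cast
        ring
    _ ≤ 3.5 * n + A := by
        have h1 := hxa (n-1); have h2 := hxa 0
        have hs1 : (s (n-1) : ℝ) ≤ A / 2 := by
          have := Int.floor_le (b (n-1) / 2)
          have := (hxb (n-1)).2
          simp only [hs]
          linarith [Int.floor_le (b (n-1) / 2)]
        have hs0 : (0:ℝ) ≤ (s 0 : ℝ) := by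
          have : (0:ℤ) ≤ s 0 := Int.floor_nonneg.2 (by linarith [(hxb 0).1])
          exact_mod_cast this
        have hsq : A * A = n := Real.mul_self_sqrt (by positivity)
        have hn1 : (1:ℝ) ≤ n := by exact_mod_cast hn
        have hmul : ((s (n-1) : ℝ) - (s 0 : ℝ)) * (3 * A) ≤ (A/2) * (3 * A) := by
          apply mul_le_mul_of_nonneg_right (by linarith) (by linarith)
        nlinarith

def f1 : ℕ → ℕ := fun j => j - 1
def r1 : ℕ → ℕ := fun j => j
def f2 : ℕ → ℕ := fun j =>
  if j = 1 then 3 else if j = 3 then 5 else if j = 5 then 0 else j - 2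
def r2 : ℕ → ℕ := fun j =>
  if j = 1 then 3 else if j = 3 then 2 else if j = 5 then 1 else j
def f3 : ℕ → ℕ := fun j =>
  if j = 1 then 4 else if j = 2 then 5 else if j = 4 then 0 else if j = 5 then 1 else j - 3
def r3 : ℕ → ℕ := fun j =>
  if j = 0 then 0 else if j = 4 then 1 else if j = 1 then 2 else
    if j = 5 then 3 else if j = 2 then 4 else j + 4

lemma f1_lt {n : ℕ} (hn : 6 ≤ n) : ∀ j, j < n → f1 j < n := by
  intro j hj; simp only [f1]; omega
lemma f2_lt {n : ℕ} (hn : 6 ≤ n) : ∀ j, j < n → f2 j < n := by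
  intro j hj; simp only [f2]; split_ifs <;> (try simp_all) <;> omega
lemma f3_lt {n : ℕ} (hn : 6 ≤ n) : ∀ j, j < n → f3 j < n := by
  intro j hj; simp only [f3]; split_ifs <;> (try simp_all) <;> omega

lemma fr1 : ∀ j, j ≠ 0 → f1 j ≠ j ∧ r1 (f1 j) < r1 j := by
  intro j hj; simp only [f1, r1]; omega
lemma fr2 : ∀ j, j ≠ 0 → f2 j ≠ j ∧ r2 (f2 j) < r2 j := by
  intro j hj; simp only [f2, r2]; split_ifs <;> (try simp_all) <;> omega
lemma fr3 : ∀ j, j ≠ 0 → f3 j ≠ j ∧ r3 (f3 j) < r3 j := by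
  intro j hj; simp only [f3, r3]; split_ifs <;> (try simp_all) <;> omega

lemma f1_zero : f1 0 = 0 := rfl
lemma f2_zero : f2 0 = 0 := rfl
lemma f3_zero : f3 0 = 0 := rfl

/-- disjointness at the index level -/
lemma idx_disj12 : ∀ i j : ℕ, i ≠ 0 → j ≠ 0 →
    ¬((i = j ∧ f1 i = f2 j) ∨ (i = f2 j ∧ f1 i = j)) := by
  intro i j hi hj
  simp only [f1, f2]
  split_ifs <;> (try simp_all) <;> omega
lemma idx_disj13 : ∀ i j : ℕ, i ≠ 0 → j ≠ 0 →
    ¬((i = j ∧ f1 i = f3 j) ∨ (i = f3 j ∧ f1 i = j)) := by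
  intro i j hi hj
  simp only [f1, f3]
  split_ifs <;> (try simp_all) <;> omega
lemma idx_disj23 : ∀ i j : ℕ, i ≠ 0 → j ≠ 0 →
    ¬((i = j ∧ f2 i = f3 j) ∨ (i = f3 j ∧ f2 i = j)) := by
  intro i j hi hj
  simp only [f2, f3]
  split_ifs <;> (try simp_all) <;> omega

noncomputable def tourLen {n : ℕ} (hn : 0 < n) (σ : Equiv.Perm (Fin n))
    (x : Fin n → EuclideanSpace ℝ (Fin 2)) : ℝ :=
  ∑ t ∈ range (n-1), dist (x (vtx hn σ t)) (x (vtx hn σ (t+1)))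

lemma tourLen_nonneg {n : ℕ} (hn : 0 < n) (σ : Equiv.Perm (Fin n))
    (x : Fin n → EuclideanSpace ℝ (Fin 2)) : 0 ≤ tourLen hn σ x :=
  Finset.sum_nonneg (fun _ _ => dist_nonneg)

/-- Conversion of tree length to a range sum. -/
lemma lenSum_eq_range {n : ℕ} (hn : 0 < n) (x : Fin n → EuclideanSpace ℝ (Fin 2))
    (σ : Equiv.Perm (Fin n)) (f : ℕ → ℕ) (hf : ∀ j, j < n → f j < n)
    (r : ℕ → ℕ) (hfr : ∀ j, j ≠ 0 → f j ≠ j ∧ r (f j) < r j) :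
    haveI : NeZero n := ⟨hn.ne'⟩
    lenSum (eucLen x)
        ((univ.erase (0 : Fin n)).image (fun j => s(σ j, σ ⟨f j.val, hf _ j.isLt⟩)))
      = ∑ t ∈ range n,
          (if t = 0 then 0 else dist (x (vtx hn σ t)) (x (vtx hn σ (f t)))) := by
  haveI : NeZero n := ⟨hn.ne'⟩
  set P : Fin n → Fin n := fun j => ⟨f j.val, hf _ j.isLt⟩ with hP
  have hlt : ∀ j : Fin n, j ≠ 0 → P j ≠ j ∧ (fun j : Fin n => r j.val) (P j)
      < (fun j : Fin n => r j.val) j := by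
    intro j hj
    have hj' : j.val ≠ 0 := Fin.val_ne_zero_iff.mpr hj
    obtain ⟨h1, h2⟩ := hfr j.val hj'
    exact ⟨by simp [hP, Fin.ext_iff, h1], h2⟩
  rw [lenSum_parent hn x σ P (fun j => r j.val) hlt]
  rw [← Fin.sum_univ_eq_sum_range
    (fun t => (if t = 0 then 0 else dist (x (vtx hn σ t)) (x (vtx hn σ (f t))))) n]
  rw [← Finset.sum_erase (Finset.univ) (a := (0 : Fin n)) (by simp)]
  apply Finset.sum_congr rfl
  intro j hj
  have hj0 : j ≠ 0 := (Finset.mem_erase.1 hj).1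
  have hj' : (j.val : ℕ) ≠ 0 := Fin.val_ne_zero_iff.mpr hj0
  rw [if_neg hj']
  congr 1
  · rw [vtx_val hn σ j]
  · rw [show f j.val = (P j).val from rfl, vtx_val hn σ (P j)]

lemma indicator_sum_le {m : ℕ} {A : ℝ} (hA : 0 ≤ A) :
    ∑ t ∈ range m, (if t ≤ 4 then 2*A else (0:ℝ)) ≤ 10 * A := by
  classical
  rw [Finset.sum_ite, Finset.sum_const, Finset.sum_const_zero, add_zero, nsmul_eq_mul]
  have hsub : (range m).filter (fun t => t ≤ 4) ⊆ range 5 := by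
    intro t ht
    simp only [Finset.mem_filter, Finset.mem_range] at ht ⊢
    omega
  have hcard : (((range m).filter (fun t => t ≤ 4)).card : ℝ) ≤ 5 := by
    have := Finset.card_le_card hsub
    rw [Finset.card_range] at this
    exact_mod_cast this
  nlinarith

lemma shift_sum_le {m : ℕ} (d : ℕ → ℝ) (hd : ∀ t, 0 ≤ d t) {C : ℝ} (hC : d 0 ≤ C)
    (hC0 : 0 ≤ C) (k : ℕ) :
    ∑ t ∈ range m, d (t - k) ≤ k * C + ∑ t ∈ range m, d t := by
  induction k with
  | zero => simp
  | succ k ih =>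
    have step : ∑ t ∈ range m, d (t - (k+1)) ≤ C + ∑ t ∈ range m, d (t - k) := by
      rcases Nat.eq_zero_or_pos m with rfl | hm
      · simp
        linarith
      · have hm' : m = (m-1)+1 := by omega
        rw [hm', Finset.sum_range_succ' (fun t => d (t - (k+1))),
          Finset.sum_range_succ' (fun t => d (t - k))]
        have h0 : (0:ℕ) - (k+1) = 0 := by omega
        have h0' : (0:ℕ) - k = 0 := by omega
        rw [h0, h0']
        have hterm : ∀ t, d (t + 1 - (k+1)) = d (t - k) := by
          intro t; congr 1; omega
        simp only [hterm]
        have : ∑ t ∈ range (m-1), d (t - k) ≤ C + ∑ t ∈ range (m-1), d (t + 1 - k) := by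
          have hterm2 : ∀ t ∈ range (m-1), d (t - k) ≤ d (t - k) := fun t _ => le_refl _
          -- compare sum of d (t-k) with sum of d(t+1-k): reindex
          have heq : ∑ t ∈ range (m-1), d (t + 1 - k) + d (0 - k)
              = ∑ t ∈ range ((m-1)+1), d (t - k) := by
            rw [Finset.sum_range_succ' (fun t => d (t - k))]
          have hmono : ∑ t ∈ range (m-1), d (t - k) ≤ ∑ t ∈ range ((m-1)+1), d (t - k) := by
            apply Finset.sum_le_sum_of_subset_of_nonneg
            · exact Finset.range_subset_range.2 (by omega)
            · exact fun t _ _ => hd _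
          rw [← heq] at hmono
          rw [h0'] at hmono
          linarith [hC]
        linarith
    have := ih
    push_cast
    push_cast at this
    linarith

lemma disj_trees {n : ℕ} (hn : 0 < n) (σ : Equiv.Perm (Fin n)) (f g : ℕ → ℕ)
    (hf : ∀ j, j < n → f j < n) (hg : ∀ j, j < n → g j < n)
    (hij : ∀ i j : ℕ, i ≠ 0 → j ≠ 0 → ¬((i = j ∧ f i = g j) ∨ (i = g j ∧ f i = j))) :
    haveI : NeZero n := ⟨hn.ne'⟩
    Disjoint ((univ.erase (0:Fin n)).image (fun j => s(σ j, σ ⟨f j.val, hf _ j.isLt⟩)))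
      ((univ.erase (0:Fin n)).image (fun j => s(σ j, σ ⟨g j.val, hg _ j.isLt⟩))) := by
  haveI : NeZero n := ⟨hn.ne'⟩
  rw [Finset.disjoint_left]
  rintro e he1 he2
  simp only [Finset.mem_image, Finset.mem_erase, Finset.mem_univ, and_true] at he1 he2
  obtain ⟨i, hi, rfl⟩ := he1
  obtain ⟨j, hj, heq⟩ := he2
  have hi' : i.val ≠ 0 := Fin.val_ne_zero_iff.mpr hi
  have hj' : j.val ≠ 0 := Fin.val_ne_zero_iff.mpr hj
  apply hij i.val j.val hi' hj'
  rcases Sym2.eq_iff.1 heq with ⟨h1, h2⟩ | ⟨h1, h2⟩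
  · left
    have e1 : j = i := σ.injective h1
    have e2 : (⟨g j.val, hg _ j.isLt⟩ : Fin n) = ⟨f i.val, hf _ i.isLt⟩ := σ.injective h2
    have e2' : g j.val = f i.val := by simpa [Fin.ext_iff] using e2
    exact ⟨by rw [e1], e2'.symm⟩
  · right
    have e1 : j = (⟨f i.val, hf _ i.isLt⟩ : Fin n) := σ.injective h1
    have e2 : (⟨g j.val, hg _ j.isLt⟩ : Fin n) = i := σ.injective h2
    have e1' : j.val = f i.val := by simpa [Fin.ext_iff] using e1
    have e2' : g j.val = i.val := by simpa [Fin.ext_iff] using e2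
    exact ⟨e2'.symm, e1'.symm⟩

lemma three_trees {n : ℕ} (hn6 : 6 ≤ n)
    (x : Fin n → EuclideanSpace ℝ (Fin 2))
    (hx : ∀ i : Fin n, ∀ k : Fin 2, x i k ∈ Set.Icc (0:ℝ) (Real.sqrt n))
    (σ : Equiv.Perm (Fin n)) :
    ∃ E₁ E₂ E₃ : Finset (Sym2 (Fin n)),
      IsST (⊤ : SimpleGraph (Fin n)) E₁ ∧ IsST (⊤ : SimpleGraph (Fin n)) E₂ ∧
      IsST (⊤ : SimpleGraph (Fin n)) E₃ ∧
      Disjoint E₁ E₂ ∧ Disjoint E₁ E₃ ∧ Disjoint E₂ E₃ ∧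
      lenSum (eucLen x) E₁ ≤ tourLen (by omega) σ x ∧
      lenSum (eucLen x) E₂ ≤ 2 * tourLen (by omega) σ x + 12 * Real.sqrt n ∧
      lenSum (eucLen x) E₃ ≤ 3 * tourLen (by omega) σ x + 16 * Real.sqrt n := by
  have hn : 0 < n := by omega
  haveI : NeZero n := ⟨hn.ne'⟩
  set A := Real.sqrt n with hA
  have hA0 : 0 ≤ A := Real.sqrt_nonneg _
  set v : ℕ → Fin n := fun t => vtx hn σ t with hv
  set d : ℕ → ℝ := fun t => dist (x (v t)) (x (v (t+1))) with hd
  have hd0 : ∀ t, 0 ≤ d t := fun t => dist_nonneg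
  have hdA : ∀ t, d t ≤ 2 * A := fun t => dist_le_of_square (hx _) (hx _)
  have hL : tourLen hn σ x = ∑ t ∈ range (n-1), d t := rfl
  set L := ∑ t ∈ range (n-1), d t with hLdef
  have hL0 : 0 ≤ L := Finset.sum_nonneg (fun t _ => hd0 t)
  have hsplit : ∀ (F : ℕ → ℝ), ∑ t ∈ range n, F t = (∑ t ∈ range (n-1), F (t+1)) + F 0 := by
    intro F
    have h' : range n = range ((n-1)+1) := by congr 1; omega
    rw [h', Finset.sum_range_succ']
  -- translate index conditions to Fin
  have mkP : ∀ (f : ℕ → ℕ) (hf : ∀ j, j < n → f j < n) (r : ℕ → ℕ)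
      (hfr : ∀ j, j ≠ 0 → f j ≠ j ∧ r (f j) < r j) (hfz : f 0 = 0),
      ((fun j : Fin n => (⟨f j.val, hf _ j.isLt⟩ : Fin n)) 0 = 0) ∧
      (∀ j : Fin n, j ≠ 0 → (fun j : Fin n => (⟨f j.val, hf _ j.isLt⟩ : Fin n)) j ≠ j ∧
        (fun j : Fin n => r j.val) ((fun j : Fin n => (⟨f j.val, hf _ j.isLt⟩ : Fin n)) j)
          < (fun j : Fin n => r j.val) j) := by
    intro f hf r hfr hfz
    constructor
    · simp only [Fin.ext_iff]
      simpa using hfz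
    · intro j hj
      have hj' : j.val ≠ 0 := Fin.val_ne_zero_iff.mpr hj
      obtain ⟨h1, h2⟩ := hfr j.val hj'
      exact ⟨by simp [Fin.ext_iff, h1], h2⟩
  obtain ⟨hz1, hlt1⟩ := mkP f1 (f1_lt hn6) r1 fr1 f1_zero
  obtain ⟨hz2, hlt2⟩ := mkP f2 (f2_lt hn6) r2 fr2 f2_zero
  obtain ⟨hz3, hlt3⟩ := mkP f3 (f3_lt hn6) r3 fr3 f3_zero
  refine ⟨(univ.erase (0:Fin n)).image (fun j => s(σ j, σ ⟨f1 j.val, f1_lt hn6 _ j.isLt⟩)),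
    (univ.erase (0:Fin n)).image (fun j => s(σ j, σ ⟨f2 j.val, f2_lt hn6 _ j.isLt⟩)),
    (univ.erase (0:Fin n)).image (fun j => s(σ j, σ ⟨f3 j.val, f3_lt hn6 _ j.isLt⟩)),
    ?_, ?_, ?_, ?_, ?_, ?_, ?_, ?_, ?_⟩
  · exact parent_isST hn σ _ (fun j => r1 j.val) hz1 hlt1
  · exact parent_isST hn σ _ (fun j => r2 j.val) hz2 hlt2
  · exact parent_isST hn σ _ (fun j => r3 j.val) hz3 hlt3
  · exact disj_trees hn σ f1 f2 (f1_lt hn6) (f2_lt hn6) idx_disj12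
  · exact disj_trees hn σ f1 f3 (f1_lt hn6) (f3_lt hn6) idx_disj13
  · exact disj_trees hn σ f2 f3 (f2_lt hn6) (f3_lt hn6) idx_disj23
  · -- length of E₁
    rw [lenSum_eq_range hn x σ f1 (f1_lt hn6) r1 fr1]
    rw [hsplit]
    simp only [↓reduceIte, add_zero]
    have : ∀ t ∈ range (n-1),
        (if t + 1 = 0 then (0:ℝ) else dist (x (vtx hn σ (t+1))) (x (vtx hn σ (f1 (t+1)))))
          = d t := by
      intro t ht
      rw [if_neg (by omega)]
      have hft : f1 (t+1) = t := by simp [f1]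
      rw [hft]
      have hdt : d t = dist (x (vtx hn σ t)) (x (vtx hn σ (t+1))) := rfl
      rw [hdt]
      exact dist_comm _ _
    rw [Finset.sum_congr rfl this]
    exact le_of_eq rfl
  · -- length of E₂
    rw [lenSum_eq_range hn x σ f2 (f2_lt hn6) r2 fr2]
    rw [hsplit]
    simp only [↓reduceIte, add_zero]
    have hterm : ∀ t ∈ range (n-1),
        (if t + 1 = 0 then (0:ℝ) else dist (x (vtx hn σ (t+1))) (x (vtx hn σ (f2 (t+1)))))
          ≤ (if t ≤ 4 then 2*A else 0) + (d (t-1) + d t) := by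
      intro t ht
      rw [if_neg (by omega)]
      by_cases h1 : t + 1 = 1
      · have ht4 : t ≤ 4 := by omega
        rw [if_pos ht4]
        have := dist_le_of_square (A := A) (hx (vtx hn σ (t+1))) (hx (vtx hn σ (f2 (t+1))))
        have := hd0 (t-1); have := hd0 t
        linarith
      · by_cases h3 : t + 1 = 3
        · have ht4 : t ≤ 4 := by omega
          rw [if_pos ht4]
          have := dist_le_of_square (A := A) (hx (vtx hn σ (t+1))) (hx (vtx hn σ (f2 (t+1))))
          have := hd0 (t-1); have := hd0 t
          linarith
        · by_cases h5 : t + 1 = 5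
          · have ht4 : t ≤ 4 := by omega
            rw [if_pos ht4]
            have := dist_le_of_square (A := A) (hx (vtx hn σ (t+1))) (hx (vtx hn σ (f2 (t+1))))
            have := hd0 (t-1); have := hd0 t
            linarith
          · have hf : f2 (t+1) = t - 1 := by
              simp only [f2]
              rw [if_neg h1, if_neg h3, if_neg h5]
              omega
            rw [hf]
            have ht1 : t - 1 + 1 = t := by omega
            have htri : dist (x (vtx hn σ (t+1))) (x (vtx hn σ (t-1)))
                ≤ d t + d (t-1) := by
              calc dist (x (vtx hn σ (t+1))) (x (vtx hn σ (t-1)))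
                  ≤ dist (x (vtx hn σ (t+1))) (x (vtx hn σ t))
                    + dist (x (vtx hn σ t)) (x (vtx hn σ (t-1))) := dist_triangle _ _ _
                _ = d t + d (t-1) := by
                    have hdt : ∀ s : ℕ, d s = dist (x (vtx hn σ s)) (x (vtx hn σ (s+1))) :=
                      fun s => rfl
                    have a1 : dist (x (vtx hn σ (t+1))) (x (vtx hn σ t)) = d t := by
                      rw [hdt t]; exact dist_comm _ _
                    have a2 : dist (x (vtx hn σ t)) (x (vtx hn σ (t-1))) = d (t-1) := by
                      rw [hdt (t-1), ht1]; exact dist_comm _ _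
                    rw [a1, a2]
            split_ifs with h
            · linarith
            · linarith
    calc ∑ t ∈ range (n-1),
        (if t + 1 = 0 then (0:ℝ) else dist (x (vtx hn σ (t+1))) (x (vtx hn σ (f2 (t+1)))))
        ≤ ∑ t ∈ range (n-1), ((if t ≤ 4 then 2*A else 0) + (d (t-1) + d t)) :=
          Finset.sum_le_sum hterm
      _ = (∑ t ∈ range (n-1), (if t ≤ 4 then 2*A else 0))
            + ((∑ t ∈ range (n-1), d (t-1)) + ∑ t ∈ range (n-1), d t) := by
          rw [Finset.sum_add_distrib, Finset.sum_add_distrib]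
      _ ≤ 10*A + ((1 * (2*A) + L) + L) := by
          have i1 := indicator_sum_le (m := n-1) hA0
          have i2 := shift_sum_le (m := n-1) d hd0 (hdA 0) (by linarith) 1
          push_cast at i2
          exact add_le_add i1 (add_le_add i2 (le_refl _))
      _ ≤ 2 * tourLen hn σ x + 12 * A := by
          rw [hL]
          linarith
  · -- length of E₃
    rw [lenSum_eq_range hn x σ f3 (f3_lt hn6) r3 fr3]
    rw [hsplit]
    simp only [↓reduceIte, add_zero]
    have hterm : ∀ t ∈ range (n-1),
        (if t + 1 = 0 then (0:ℝ) else dist (x (vtx hn σ (t+1))) (x (vtx hn σ (f3 (t+1)))))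
          ≤ (if t ≤ 4 then 2*A else 0) + (d (t-2) + (d (t-1) + d t)) := by
      intro t ht
      rw [if_neg (by omega)]
      by_cases hsp : t + 1 = 1 ∨ t + 1 = 2 ∨ t + 1 = 4 ∨ t + 1 = 5
      · have ht4 : t ≤ 4 := by omega
        rw [if_pos ht4]
        have := dist_le_of_square (A := A) (hx (vtx hn σ (t+1))) (hx (vtx hn σ (f3 (t+1))))
        have := hd0 (t-2); have := hd0 (t-1); have := hd0 t
        linarith
      · push_neg at hsp
        obtain ⟨h1, h2, h4, h5⟩ := hsp
        have hf : f3 (t+1) = t - 2 := by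
          simp only [f3]
          rw [if_neg h1, if_neg h2, if_neg h4, if_neg h5]
          omega
        rw [hf]
        have ht2 : 2 ≤ t := by omega
        have he1 : t - 1 + 1 = t := by omega
        have he2 : t - 2 + 1 = t - 1 := by omega
        have htri : dist (x (vtx hn σ (t+1))) (x (vtx hn σ (t-2)))
            ≤ d t + (d (t-1) + d (t-2)) := by
          calc dist (x (vtx hn σ (t+1))) (x (vtx hn σ (t-2)))
              ≤ dist (x (vtx hn σ (t+1))) (x (vtx hn σ t))
                + dist (x (vtx hn σ t)) (x (vtx hn σ (t-2))) := dist_triangle _ _ _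
            _ ≤ dist (x (vtx hn σ (t+1))) (x (vtx hn σ t))
                + (dist (x (vtx hn σ t)) (x (vtx hn σ (t-1)))
                  + dist (x (vtx hn σ (t-1))) (x (vtx hn σ (t-2)))) := by
                linarith [dist_triangle (x (vtx hn σ t)) (x (vtx hn σ (t-1)))
                  (x (vtx hn σ (t-2)))]
            _ = d t + (d (t-1) + d (t-2)) := by
                have hdt : ∀ s : ℕ, d s = dist (x (vtx hn σ s)) (x (vtx hn σ (s+1))) :=
                  fun s => rfl
                have a1 : dist (x (vtx hn σ (t+1))) (x (vtx hn σ t)) = d t := by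
                  rw [hdt t]; exact dist_comm _ _
                have a2 : dist (x (vtx hn σ t)) (x (vtx hn σ (t-1))) = d (t-1) := by
                  rw [hdt (t-1), he1]; exact dist_comm _ _
                have a3 : dist (x (vtx hn σ (t-1))) (x (vtx hn σ (t-2))) = d (t-2) := by
                  rw [hdt (t-2), he2]; exact dist_comm _ _
                rw [a1, a2, a3]
        split_ifs with h
        · linarith
        · linarith
    calc ∑ t ∈ range (n-1),
        (if t + 1 = 0 then (0:ℝ) else dist (x (vtx hn σ (t+1))) (x (vtx hn σ (f3 (t+1)))))
        ≤ ∑ t ∈ range (n-1), ((if t ≤ 4 then 2*A else 0) + (d (t-2) + (d (t-1) + d t))) :=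
          Finset.sum_le_sum hterm
      _ = (∑ t ∈ range (n-1), (if t ≤ 4 then 2*A else 0))
            + ((∑ t ∈ range (n-1), d (t-2)) + ((∑ t ∈ range (n-1), d (t-1))
              + ∑ t ∈ range (n-1), d t)) := by
          rw [Finset.sum_add_distrib, Finset.sum_add_distrib, Finset.sum_add_distrib]
      _ ≤ 10*A + ((2 * (2*A) + L) + ((1 * (2*A) + L) + L)) := by
          have i1 := indicator_sum_le (m := n-1) hA0
          have i2 := shift_sum_le (m := n-1) d hd0 (hdA 0) (by linarith) 2
          have i3 := shift_sum_le (m := n-1) d hd0 (hdA 0) (by linarith) 1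
          push_cast at i2 i3
          exact add_le_add i1 (add_le_add i2 (add_le_add i3 (le_refl _)))
      _ ≤ 3 * tourLen hn σ x + 16 * A := by
          rw [hL]
          linarith

lemma one_le_abs_natcast_sub {a b : ℕ} (h : a ≠ b) : (1:ℝ) ≤ |(a:ℝ) - (b:ℝ)| := by
  have h1 : (1:ℤ) ≤ |(a:ℤ) - (b:ℤ)| :=
    Int.one_le_abs (sub_ne_zero.2 (by exact_mod_cast h))
  calc (1:ℝ) = ((1:ℤ):ℝ) := by norm_num
    _ ≤ ((|(a:ℤ) - (b:ℤ)| : ℤ) : ℝ) := by exact_mod_cast h1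
    _ = |(((a:ℤ) - (b:ℤ) : ℤ) : ℝ)| := by rw [Int.cast_abs]
    _ = |(a:ℝ) - (b:ℝ)| := by push_cast; ring_nf

lemma natSqrt_le_realSqrt (n : ℕ) : ((Nat.sqrt n : ℕ) : ℝ) ≤ Real.sqrt n := by
  have h1 : ((Nat.sqrt n : ℕ) : ℝ) = Real.sqrt (((Nat.sqrt n : ℕ) : ℝ)^2) := by
    rw [Real.sqrt_sq (by positivity)]
  rw [h1]
  apply Real.sqrt_le_sqrt
  have := Nat.sqrt_le' n
  exact_mod_cast this

/-- the grid configuration forces `n - 1 ≤ c₁ n`. -/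
lemma grid_lower (c₁ : ℝ)
    (hbound : ∀ n : ℕ, 0 < n → ∀ x : Fin n → EuclideanSpace ℝ (Fin 2),
      (∀ i : Fin n, ∀ k : Fin 2, x i k ∈ Set.Icc (0 : ℝ) (Real.sqrt n)) →
      ∀ T : Finset (Sym2 (Fin n)), IsST (⊤ : SimpleGraph (Fin n)) T →
        (∀ T', IsST (⊤ : SimpleGraph (Fin n)) T' →
          lenSum (eucLen x) T ≤ lenSum (eucLen x) T') →
        lenSum (eucLen x) T ≤ c₁ * n)
    (n : ℕ) (hn : 0 < n) : (n:ℝ) - 1 ≤ c₁ * n := by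
  classical
  haveI : NeZero n := ⟨hn.ne'⟩
  set m := Nat.sqrt n + 1 with hm
  have hm0 : 0 < m := by omega
  set y : Fin n → EuclideanSpace ℝ (Fin 2) := fun i =>
    (WithLp.equiv 2 (Fin 2 → ℝ)).symm ![(↑(i.val % m) : ℝ), (↑(i.val / m) : ℝ)] with hy
  have hyk : ∀ i : Fin n, y i 0 = (↑(i.val % m) : ℝ) ∧ y i 1 = (↑(i.val / m) : ℝ) := by
    intro i
    constructor <;> rfl
  have hybound : ∀ i : Fin n, ∀ k : Fin 2, y i k ∈ Set.Icc (0 : ℝ) (Real.sqrt n) := by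
    intro i k
    have hmod : i.val % m ≤ Nat.sqrt n := by
      have := Nat.mod_lt i.val hm0
      omega
    have hdiv : i.val / m ≤ Nat.sqrt n := by
      have h2 : i.val < m * m := lt_of_lt_of_le i.isLt (le_of_lt (Nat.lt_succ_sqrt n))
      have h3 : i.val / m < m := Nat.div_lt_of_lt_mul h2
      have h4 : i.val / m < Nat.sqrt n + 1 := hm ▸ h3
      exact Nat.lt_succ_iff.mp h4
    have hns := natSqrt_le_realSqrt n
    have hk : k = 0 ∨ k = 1 := by
      rcases k with ⟨kv, hkv⟩
      interval_cases kv
      · left; rfl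
      · right; rfl
    rcases hk with rfl | rfl
    · rw [(hyk i).1]
      constructor
      · positivity
      · calc ((i.val % m : ℕ) : ℝ) ≤ ((Nat.sqrt n : ℕ) : ℝ) := by exact_mod_cast hmod
          _ ≤ Real.sqrt n := hns
    · rw [(hyk i).2]
      constructor
      · positivity
      · calc ((i.val / m : ℕ) : ℝ) ≤ ((Nat.sqrt n : ℕ) : ℝ) := by exact_mod_cast hdiv
          _ ≤ Real.sqrt n := hns
  have hdist : ∀ i j : Fin n, i ≠ j → (1:ℝ) ≤ dist (y i) (y j) := by
    intro i j hij
    by_cases hmod : i.val % m = j.val % m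
    · have hdiv : i.val / m ≠ j.val / m := by
        intro h
        apply hij
        have h1 := Nat.div_add_mod i.val m
        have h2 := Nat.div_add_mod j.val m
        have : i.val = j.val := by
          rw [← h1, ← h2, hmod, h]
        exact Fin.ext this
      calc (1:ℝ) ≤ |y i 1 - y j 1| := by
            rw [(hyk i).2, (hyk j).2]
            exact one_le_abs_natcast_sub hdiv
        _ ≤ dist (y i) (y j) := coord_le_dist _ _ 1
    · calc (1:ℝ) ≤ |y i 0 - y j 0| := by
            rw [(hyk i).1, (hyk j).1]
            exact one_le_abs_natcast_sub hmod
        _ ≤ dist (y i) (y j) := coord_le_dist _ _ 0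
  -- a spanning tree exists (path tree)
  have hf1' : ∀ j, j < n → f1 j < n := by
    intro j hj; simp only [f1]; omega
  have hmk : ((fun j : Fin n => (⟨f1 j.val, hf1' _ j.isLt⟩ : Fin n)) 0 = 0) ∧
      (∀ j : Fin n, j ≠ 0 → (fun j : Fin n => (⟨f1 j.val, hf1' _ j.isLt⟩ : Fin n)) j ≠ j ∧
        (fun j : Fin n => r1 j.val) ((fun j : Fin n => (⟨f1 j.val, hf1' _ j.isLt⟩ : Fin n)) j)
          < (fun j : Fin n => r1 j.val) j) := by
    constructor
    · simp only [Fin.ext_iff]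
      simp [f1]
    · intro j hj
      have hj' : j.val ≠ 0 := Fin.val_ne_zero_iff.mpr hj
      obtain ⟨h1, h2⟩ := fr1 j.val hj'
      exact ⟨by simp [Fin.ext_iff, h1], h2⟩
  have hE0 : IsST (⊤ : SimpleGraph (Fin n))
      ((univ.erase (0 : Fin n)).image
        (fun j => s(Equiv.refl (Fin n) j, Equiv.refl (Fin n) ⟨f1 j.val, hf1' _ j.isLt⟩))) :=
    parent_isST hn (Equiv.refl (Fin n)) _ (fun j => r1 j.val) hmk.1 hmk.2
  -- minimal spanning tree
  set 𝒯 := Finset.univ.filter (fun T : Finset (Sym2 (Fin n)) => IsST (⊤ : SimpleGraph (Fin n)) T)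
    with h𝒯
  have hne : 𝒯.Nonempty := ⟨_, Finset.mem_filter.2 ⟨Finset.mem_univ _, hE0⟩⟩
  obtain ⟨Tm, hTmmem, hTmmin⟩ := Finset.exists_min_image 𝒯 (lenSum (eucLen y)) hne
  have hTm : IsST (⊤ : SimpleGraph (Fin n)) Tm := (Finset.mem_filter.1 hTmmem).2
  have hub := hbound n hn y hybound Tm hTm
    (fun T' hT' => hTmmin T' (Finset.mem_filter.2 ⟨Finset.mem_univ _, hT'⟩))
  have hlb : (n:ℝ) - 1 ≤ lenSum (eucLen y) Tm := by
    have hcard := card_of_isST hTm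
    have hterm : ∀ e ∈ Tm, (1:ℝ) ≤ eucLen y e := by
      intro e he
      induction e using Sym2.ind with
      | _ i j =>
        have hmem := hTm.1 he
        rw [SimpleGraph.edgeSet_top] at hmem
        have hij : i ≠ j := by simpa using hmem
        exact hdist i j hij
    have hsum := Finset.card_nsmul_le_sum Tm (eucLen y) 1 hterm
    rw [hcard, nsmul_eq_mul, mul_one] at hsum
    have hcast : ((n - 1 : ℕ) : ℝ) = (n:ℝ) - 1 := by
      rw [Nat.cast_sub hn]
      norm_num
    rw [lenSum, ← hcast]
    exact hsum
  linarith

lemma final_card {n : ℕ} (hn4 : 4 ≤ n) {E T : Finset (Sym2 (Fin n))} (hE : E.card = n - 1)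
    (h3 : 3 * (E ∩ T).card ≤ n - 1) : (n:ℝ)/2 ≤ ((E \ T).card : ℝ) := by
  have hsplit := Finset.card_inter_add_card_sdiff E T
  have h2 : n ≤ 2 * (E \ T).card := by omega
  have : (n:ℝ) ≤ 2 * ((E \ T).card : ℝ) := by exact_mod_cast h2
  linarith

theorem far_spanning_tree_exists (c₁ : ℝ) (hc₁ : 0 < c₁)
    (hbound : ∀ n : ℕ, 0 < n → ∀ x : Fin n → EuclideanSpace ℝ (Fin 2),
      (∀ i : Fin n, ∀ k : Fin 2, x i k ∈ Set.Icc (0 : ℝ) (Real.sqrt n)) →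
      ∀ T : Finset (Sym2 (Fin n)), IsST (⊤ : SimpleGraph (Fin n)) T →
        (∀ T', IsST (⊤ : SimpleGraph (Fin n)) T' →
          lenSum (eucLen x) T ≤ lenSum (eucLen x) T') →
        lenSum (eucLen x) T ≤ c₁ * n) :
    ∃ N : ℕ, ∀ n : ℕ, N ≤ n → ∀ x : Fin n → EuclideanSpace ℝ (Fin 2),
      (∀ i : Fin n, ∀ k : Fin 2, x i k ∈ Set.Icc (0 : ℝ) (Real.sqrt n)) →
      Set.InjOn (eucLen x) (⊤ : SimpleGraph (Fin n)).edgeSet →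
      ∀ T : Finset (Sym2 (Fin n)), IsST (⊤ : SimpleGraph (Fin n)) T →
        (∀ T', IsST (⊤ : SimpleGraph (Fin n)) T' →
          lenSum (eucLen x) T ≤ lenSum (eucLen x) T') →
        ∃ T'' : Finset (Sym2 (Fin n)), IsST (⊤ : SimpleGraph (Fin n)) T'' ∧
          lenSum (eucLen x) T'' ≤ 12 * c₁ * n ∧
          (n : ℝ) / 2 ≤ ((T'' \ T).card : ℝ) := by
  refine ⟨400, ?_⟩
  intro n hN x hx _hinj T hT _hTmin
  have hn : 0 < n := by omega
  have hn6 : 6 ≤ n := by omega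
  haveI : NeZero n := ⟨hn.ne'⟩
  have hc : (n:ℝ) - 1 ≤ c₁ * n := grid_lower c₁ hbound n hn
  obtain ⟨σ, hσ⟩ := exists_sorted_tour hn x hx
  have hTL : tourLen hn σ x ≤ 3.5 * n + Real.sqrt n := hσ
  obtain ⟨E₁, E₂, E₃, hST1, hST2, hST3, hd12, hd13, hd23, hl1, hl2, hl3⟩ :=
    three_trees hn6 x hx σ
  have hl1' : lenSum (eucLen x) E₁ ≤ tourLen hn σ x := hl1
  have hl2' : lenSum (eucLen x) E₂ ≤ 2 * tourLen hn σ x + 12 * Real.sqrt n := hl2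
  have hl3' : lenSum (eucLen x) E₃ ≤ 3 * tourLen hn σ x + 16 * Real.sqrt n := hl3
  set A := Real.sqrt n with hA
  have hA0 : 0 ≤ A := Real.sqrt_nonneg _
  have hA2 : A * A = n := Real.mul_self_sqrt (by positivity)
  have h20 : (20:ℝ) ≤ A := by
    have h1 : Real.sqrt 400 ≤ Real.sqrt n := Real.sqrt_le_sqrt (by exact_mod_cast hN)
    have h2 : Real.sqrt 400 = 20 := by
      rw [show (400:ℝ) = 20^2 by norm_num, Real.sqrt_sq (by norm_num)]
    rw [hA]
    linarith
  have hn400 : (400:ℝ) ≤ n := by exact_mod_cast hN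
  have hA20 : 20 * A ≤ n := by nlinarith
  have h12 : (12:ℝ)*n - 12 ≤ 12*c₁*n := by linarith
  have hb1 : lenSum (eucLen x) E₁ ≤ 12 * c₁ * n := by linarith
  have hb2 : lenSum (eucLen x) E₂ ≤ 12 * c₁ * n := by linarith
  have hb3 : lenSum (eucLen x) E₃ ≤ 12 * c₁ * n := by linarith
  have hc1 := card_of_isST hST1
  have hc2 := card_of_isST hST2
  have hc3 := card_of_isST hST3
  have hcT := card_of_isST hT
  have hd12' : Disjoint (E₁ ∩ T) (E₂ ∩ T) :=
    hd12.mono Finset.inter_subset_left Finset.inter_subset_left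
  have hd13' : Disjoint (E₁ ∩ T) (E₃ ∩ T) :=
    hd13.mono Finset.inter_subset_left Finset.inter_subset_left
  have hd23' : Disjoint (E₂ ∩ T) (E₃ ∩ T) :=
    hd23.mono Finset.inter_subset_left Finset.inter_subset_left
  have hdU : Disjoint ((E₁ ∩ T) ∪ (E₂ ∩ T)) (E₃ ∩ T) :=
    Finset.disjoint_union_left.2 ⟨hd13', hd23'⟩
  have hsub : (E₁ ∩ T) ∪ (E₂ ∩ T) ∪ (E₃ ∩ T) ⊆ T :=
    Finset.union_subset (Finset.union_subset Finset.inter_subset_right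
      Finset.inter_subset_right) Finset.inter_subset_right
  have hcardsum : (E₁ ∩ T).card + (E₂ ∩ T).card + (E₃ ∩ T).card ≤ T.card := by
    calc (E₁ ∩ T).card + (E₂ ∩ T).card + (E₃ ∩ T).card
        = ((E₁ ∩ T) ∪ (E₂ ∩ T) ∪ (E₃ ∩ T)).card := by
          rw [Finset.card_union_of_disjoint hdU, Finset.card_union_of_disjoint hd12']
      _ ≤ T.card := Finset.card_le_card hsub
  rw [hcT] at hcardsum
  have hchoice : 3 * (E₁ ∩ T).card ≤ n - 1 ∨ 3 * (E₂ ∩ T).card ≤ n - 1 ∨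
      3 * (E₃ ∩ T).card ≤ n - 1 := by omega
  rcases hchoice with h | h | h
  · exact ⟨E₁, hST1, hb1, final_card (by omega) hc1 h⟩
  · exact ⟨E₂, hST2, hb2, final_card (by omega) hc2 h⟩
  · exact ⟨E₃, hST3, hb3, final_card (by omega) hc3 h⟩
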